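/- arXiv:1409.1491 — 3 statements merged into one kernel-verified Lean document; each statement's English description precedes it below -/
import Mathlib

section
/- Let τ ∈ S_n be a product of ℓ ≥ 2 disjoint cycles (i.e., τ is not an n-cycle). Then for every x ∈ ℝ^n, the vectors x, τ(x), τ²(x), ..., τ^(ν-1)(x) (ν the order of τ) do not span ℝ^n; that is, the τ-order of x is strictly less than n. -/
open Finset in
private noncomputable def sumL (n : ℕ) (S : Finset (Fin n)) : (Fin n → ℝ) →ₗ[ℝ] ℝ where
  toFun y := ∑ k ∈ S, y k
  map_add' y z := by simp [Finset.sum_add_distrib]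
  map_smul' c y := by simp [Finset.mul_sum]

/-- If τ ∈ Sₙ is not an n-cycle (i.e. the cyclic group it generates does not act transitively
on {1, …, n}), then for every x ∈ ℝⁿ the vectors x, τ(x), …, τ^{ν-1}(x) (ν the order of τ)
do not span ℝⁿ: the τ-order of x is strictly less than n. -/
theorem stmt4 (n : ℕ) (τ : Equiv.Perm (Fin n))
    (hτ : ¬ ∀ i j : Fin n, ∃ m : ℕ, (τ ^ m) i = j) (x : Fin n → ℝ) :
    Module.finrank ℝ (Submodule.span ℝ
      (Set.range fun m : Fin (orderOf τ) => (fun i => x ((τ ^ (m : ℕ)) i) : Fin n → ℝ))) < n := by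
  classical
  push_neg at hτ
  obtain ⟨i, j, hij⟩ := hτ
  set S : Finset (Fin n) := Finset.univ.filter (fun k => τ.SameCycle i k) with hS
  set T : Finset (Fin n) := Finset.univ.filter (fun k => τ.SameCycle j k) with hT
  have hmemS : ∀ k, k ∈ S ↔ τ.SameCycle i k := by intro k; simp [hS]
  have hmemT : ∀ k, k ∈ T ↔ τ.SameCycle j k := by intro k; simp [hT]
  have hiS : i ∈ S := (hmemS i).2 (Equiv.Perm.SameCycle.refl _ _)
  have hjT : j ∈ T := (hmemT j).2 (Equiv.Perm.SameCycle.refl _ _)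
  have hnsc : ¬ τ.SameCycle i j := by
    intro h
    obtain ⟨m, _, hm⟩ := h.exists_pow_eq'
    exact hij m hm
  have hjS : j ∉ S := fun h => hnsc ((hmemS j).1 h)
  have hiT : i ∉ T := fun h => hnsc (((hmemT i).1 h).symm)
  -- sums over orbits are invariant
  have hinv : ∀ (U : Finset (Fin n)) (u : Fin n), (∀ k, k ∈ U ↔ τ.SameCycle u k) →
      ∀ m : ℕ, ∑ k ∈ U, x ((τ ^ m) k) = ∑ k ∈ U, x k := by
    intro U u hU m
    refine Finset.sum_equiv (τ ^ m : Equiv.Perm (Fin n)) ?_ ?_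
    · intro k
      rw [hU, hU]
      exact (Equiv.Perm.sameCycle_pow_right).symm
    · intro k _; rfl
  set c₁ : ℝ := ∑ k ∈ S, x k with hc₁
  set c₂ : ℝ := ∑ k ∈ T, x k with hc₂
  set φ : (Fin n → ℝ) →ₗ[ℝ] ℝ := c₂ • sumL n S - c₁ • sumL n T with hφ
  have hgen : ∀ m : Fin (orderOf τ),
      (fun i => x ((τ ^ (m : ℕ)) i) : Fin n → ℝ) ∈ LinearMap.ker φ := by
    intro m
    simp only [LinearMap.mem_ker, hφ, LinearMap.sub_apply, LinearMap.smul_apply, sumL,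
      LinearMap.coe_mk, AddHom.coe_mk, smul_eq_mul]
    rw [hinv S i hmemS, hinv T j hmemT, ← hc₁, ← hc₂, mul_comm, sub_self]
  -- choose a nonzero functional vanishing on the span
  have key : ∃ ψ : (Fin n → ℝ) →ₗ[ℝ] ℝ, ψ ≠ 0 ∧ ∀ m : Fin (orderOf τ),
      (fun i => x ((τ ^ (m : ℕ)) i) : Fin n → ℝ) ∈ LinearMap.ker ψ := by
    have sumS_single : ∀ (u : Fin n) (U : Finset (Fin n)), u ∈ U →
        sumL n U (Pi.single u 1) = 1 := by
      intro u U hu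
      simp only [sumL, LinearMap.coe_mk, AddHom.coe_mk]
      rw [Finset.sum_eq_single u]
      · simp
      · intro b _ hb; simp [Pi.single_eq_of_ne hb]
      · intro h; exact absurd hu h
    have sumS_single0 : ∀ (u : Fin n) (U : Finset (Fin n)), u ∉ U →
        sumL n U (Pi.single u 1) = 0 := by
      intro u U hu
      simp only [sumL, LinearMap.coe_mk, AddHom.coe_mk]
      refine Finset.sum_eq_zero fun b hb => ?_
      have : b ≠ u := fun h => hu (h ▸ hb)
      simp [Pi.single_eq_of_ne this]
    by_cases hc : c₁ = 0
    · refine ⟨sumL n S, ?_, ?_⟩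
      · intro h
        have := sumS_single i S hiS
        rw [h] at this; simp at this
      · intro m
        simp only [LinearMap.mem_ker, sumL, LinearMap.coe_mk, AddHom.coe_mk]
        rw [hinv S i hmemS, ← hc₁, hc]
    · refine ⟨φ, ?_, hgen⟩
      intro h
      have : φ (Pi.single j 1) = 0 := by rw [h]; rfl
      rw [hφ] at this
      simp only [LinearMap.sub_apply, LinearMap.smul_apply, smul_eq_mul] at this
      rw [sumS_single j T hjT, sumS_single0 j S hjS] at this
      simp at this
      exact hc this
  obtain ⟨ψ, hψ0, hψ⟩ := key
  have hle : Submodule.span ℝ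
      (Set.range fun m : Fin (orderOf τ) => (fun i => x ((τ ^ (m : ℕ)) i) : Fin n → ℝ))
      ≤ LinearMap.ker ψ := by
    rw [Submodule.span_le]
    rintro _ ⟨m, rfl⟩
    exact hψ m
  have hker : LinearMap.ker ψ < ⊤ := by
    rcases lt_or_eq_of_le (le_top : LinearMap.ker ψ ≤ ⊤) with h | h
    · exact h
    · exact absurd (LinearMap.ker_eq_top.1 h) hψ0
  calc Module.finrank ℝ (Submodule.span ℝ
      (Set.range fun m : Fin (orderOf τ) => (fun i => x ((τ ^ (m : ℕ)) i) : Fin n → ℝ)))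
      ≤ Module.finrank ℝ (LinearMap.ker ψ) := Submodule.finrank_mono hle
    _ < Module.finrank ℝ (Fin n → ℝ) := Submodule.finrank_lt hker.ne
    _ = n := by simp
end

section
/- Let τ ∈ S_n be a product of ℓ disjoint cycles of lengths k_1,...,k_ℓ. Then dim span_ℝ{x, τ(x), ..., τ^{ν-1}(x)} ≤ n − (ℓ − 1) for every x ∈ ℝ^n. -/
/-- If τ ∈ Sₙ is a product of ℓ disjoint cycles (fixed points as 1-cycles), then for every
x ∈ ℝⁿ, dim span{x, τ(x), …, τ^{ν-1}(x)} ≤ n − (ℓ − 1). -/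
theorem stmt6 (n ℓ : ℕ) (τ : Equiv.Perm (Fin n)) (k : Fin ℓ → ℕ)
    (hk : ∀ i, 1 ≤ k i) (hsum : ∑ i, k i = n)
    (hcyc : τ.cycleType = Multiset.filter (fun m => 2 ≤ m) (Multiset.map k Finset.univ.val))
    (x : Fin n → ℝ) :
    Module.finrank ℝ (Submodule.span ℝ
      (Set.range fun m : Fin (orderOf τ) => (fun i => x ((τ ^ (m : ℕ)) i) : Fin n → ℝ)))
    ≤ n - (ℓ - 1) := by
  classical
  have hdim : Module.finrank ℝ (Fin n → ℝ) = n := by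
    rw [Module.finrank_fintype_fun_eq_card, Fintype.card_fin]
  rcases Nat.eq_zero_or_pos ℓ with hl0 | hlpos
  · -- trivial adjustment when ℓ = 0 : bound by n
    subst hl0
    calc Module.finrank ℝ (Submodule.span ℝ _) ≤ Module.finrank ℝ (Fin n → ℝ) :=
          Submodule.finrank_le _
      _ ≤ n - (0 - 1) := by omega
  -- ℓ ≤ n
  have hln : ℓ ≤ n := by
    calc ℓ = ∑ _i : Fin ℓ, 1 := by simp
      _ ≤ ∑ i, k i := Finset.sum_le_sum (fun i _ => hk i)
      _ = n := hsum
  -- set up the quotient by the same-cycle relation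
  set S : Setoid (Fin n) := Equiv.Perm.SameCycle.setoid τ with hS
  let Q := Quotient S
  let π : Fin n → Q := Quotient.mk S
  have hπ : ∀ a b : Fin n, τ.SameCycle a b → π a = π b := fun a b h => Quotient.sound h
  -- the "sum over each orbit" linear map
  let Φ : (Fin n → ℝ) →ₗ[ℝ] (Q → ℝ) :=
    { toFun := fun y q => ∑ i ∈ Finset.univ.filter (fun i => π i = q), y i
      map_add' := fun y z => by
        funext q
        exact Finset.sum_add_distrib
      map_smul' := fun c y => by
        funext q
        simp [Finset.mul_sum] }
  have hΦ : ∀ (y : Fin n → ℝ) (q : Q),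
      Φ y q = ∑ i ∈ Finset.univ.filter (fun i => π i = q), y i := fun _ _ => rfl
  have hfibne : ∀ q : Q, (Finset.univ.filter (fun i => π i = q)).Nonempty := by
    intro q
    obtain ⟨a, rfl⟩ := Quotient.exists_rep q
    exact ⟨a, by simp [π]⟩
  have hsurj : Function.Surjective Φ := by
    intro z
    refine ⟨fun i => z (π i) / (Finset.univ.filter (fun j => π j = π i)).card, ?_⟩
    funext q
    rw [hΦ]
    rw [Finset.sum_congr rfl
      (g := fun _ => z q / ((Finset.univ.filter (fun j => π j = q)).card : ℝ)) ?_]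
    · rw [Finset.sum_const, nsmul_eq_mul, mul_div_cancel₀]
      exact Nat.cast_ne_zero.mpr (Finset.card_ne_zero.mpr (hfibne q))
    · intro i hi
      have hiq : π i = q := (Finset.mem_filter.mp hi).2
      rw [hiq]
  have hrange : LinearMap.range Φ = ⊤ := LinearMap.range_eq_top.mpr hsurj
  have hrn := LinearMap.finrank_range_add_finrank_ker Φ
  rw [hrange, finrank_top, hdim, Module.finrank_fintype_fun_eq_card] at hrn
  -- counting the orbits: there are exactly ℓ of them
  have hcardQ : Fintype.card Q = ℓ := by
    -- a bijection between Q and fixed points ⊕ nontrivial cycles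
    let F : Fin n → {i : Fin n // τ i = i} ⊕ {c : Equiv.Perm (Fin n) // c ∈ τ.cycleFactorsFinset} :=
      fun i => if h : τ i = i then Sum.inl ⟨i, h⟩
        else Sum.inr ⟨τ.cycleOf i,
          Equiv.Perm.cycleOf_mem_cycleFactorsFinset_iff.mpr (Equiv.Perm.mem_support.mpr h)⟩
    have hF : ∀ a b : Fin n, τ.SameCycle a b → F a = F b := by
      intro a b hab
      by_cases ha : τ a = a
      · obtain ⟨m, rfl⟩ := hab
        rw [Equiv.Perm.zpow_apply_eq_self_of_apply_eq_self ha]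
      · have hb : ¬ τ b = b := by
          intro hb
          apply ha
          obtain ⟨m, hm⟩ := hab.symm
          rw [Equiv.Perm.zpow_apply_eq_self_of_apply_eq_self hb] at hm
          rw [← hm]; exact hb
        simp only [F, dif_neg ha, dif_neg hb, Sum.inr.injEq, Subtype.mk.injEq]
        exact hab.cycleOf_eq
    let G := Quotient.lift F hF
    have hGbij : Function.Bijective G := by
      constructor
      · intro q1 q2
        obtain ⟨a, rfl⟩ := Quotient.exists_rep q1
        obtain ⟨b, rfl⟩ := Quotient.exists_rep q2
        intro hab
        have hab' : F a = F b := hab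
        apply Quotient.sound
        show τ.SameCycle a b
        by_cases ha : τ a = a
        · by_cases hb : τ b = b
          · simp only [F, dif_pos ha, dif_pos hb, Sum.inl.injEq, Subtype.mk.injEq] at hab'
            rw [hab']
          · simp only [F, dif_pos ha, dif_neg hb] at hab'
            exact absurd hab' (by simp)
        · by_cases hb : τ b = b
          · simp only [F, dif_neg ha, dif_pos hb] at hab'
            exact absurd hab' (by simp)
          · simp only [F, dif_neg ha, dif_neg hb, Sum.inr.injEq, Subtype.mk.injEq] at hab'
            have hbmem : b ∈ (τ.cycleOf b).support :=
              Equiv.Perm.mem_support_cycleOf_iff.mpr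
                ⟨Equiv.Perm.SameCycle.rfl, Equiv.Perm.mem_support.mpr hb⟩
            rw [← hab'] at hbmem
            exact (Equiv.Perm.mem_support_cycleOf_iff.mp hbmem).1
      · rintro (⟨i, hi⟩ | ⟨c, hc⟩)
        · exact ⟨Quotient.mk S i, by simp [G, F, dif_pos hi]⟩
        · have hcc := (Equiv.Perm.mem_cycleFactorsFinset_iff.mp hc).1
          obtain ⟨a, ha⟩ := hcc.nonempty_support
          have haτ : ¬ τ a = a :=
            Equiv.Perm.mem_support.mp (Equiv.Perm.mem_cycleFactorsFinset_support_le hc ha)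
          refine ⟨Quotient.mk S a, ?_⟩
          show F a = _
          simp only [F, dif_neg haτ]
          exact congrArg Sum.inr (Subtype.ext (Equiv.Perm.cycle_is_cycleOf ha hc).symm)
    have hcard := Fintype.card_of_bijective hGbij
    rw [hcard, Fintype.card_sum, Fintype.card_coe, Fintype.card_subtype]
    -- now the arithmetic with the cycle type
    have hA : τ.cycleType = Multiset.map k (Finset.univ.filter (fun i => 2 ≤ k i)).val := by
      rw [hcyc, Multiset.filter_map]
      congr 1
    have hsupp : τ.support.card = ∑ i ∈ Finset.univ.filter (fun i => 2 ≤ k i), k i := by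
      rw [← Equiv.Perm.sum_cycleType, hA]
      rfl
    have hcardct : τ.cycleFactorsFinset.card
        = (Finset.univ.filter (fun i => 2 ≤ k i)).card := by
      have h1 : Multiset.card τ.cycleType
          = (Finset.univ.filter (fun i => 2 ≤ k i)).card := by
        rw [hA, Multiset.card_map]
        rfl
      rw [Equiv.Perm.cycleType_def, Multiset.card_map] at h1
      exact h1
    have hfix : (Finset.univ.filter (fun i => τ i = i)).card = n - τ.support.card := by
      have := Finset.card_filter_add_card_filter_not
        (s := Finset.univ) (p := fun i : Fin n => τ i = i)
      rw [Finset.card_univ, Fintype.card_fin] at this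
      have hsupp' : τ.support = Finset.univ.filter (fun i => ¬ τ i = i) := rfl
      rw [hsupp']
      omega
    -- split the sum ∑ k i over the two parts
    have hsplit : (∑ i ∈ Finset.univ.filter (fun i => 2 ≤ k i), k i)
        + (∑ i ∈ Finset.univ.filter (fun i => ¬ 2 ≤ k i), k i) = n := by
      rw [Finset.sum_filter_add_sum_filter_not, hsum]
    have hsmall : (∑ i ∈ Finset.univ.filter (fun i => ¬ 2 ≤ k i), k i)
        = (Finset.univ.filter (fun i => ¬ 2 ≤ k i)).card := by
      have hone : ∀ i ∈ Finset.univ.filter (fun i => ¬ 2 ≤ k i), k i = 1 := by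
        intro i hi
        have h2 := (Finset.mem_filter.mp hi).2
        have := hk i
        omega
      rw [Finset.sum_congr rfl hone, Finset.sum_const, smul_eq_mul, mul_one]
    have hsplitcard : (Finset.univ.filter (fun i => 2 ≤ k i)).card
        + (Finset.univ.filter (fun i => ¬ 2 ≤ k i)).card = ℓ := by
      rw [Finset.card_filter_add_card_filter_not, Finset.card_univ, Fintype.card_fin]
    have hsuppn : τ.support.card ≤ n := by
      calc τ.support.card ≤ Finset.univ.card := Finset.card_le_card (Finset.subset_univ _)
        _ = n := by rw [Finset.card_univ, Fintype.card_fin]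
    rw [hfix, hcardct]
    omega
  -- dimension of the kernel
  have hkerdim : Module.finrank ℝ (LinearMap.ker Φ) = n - ℓ := by
    rw [hcardQ] at hrn
    omega
  -- every vector τ^m • x lies in ker Φ ⊔ span {x}
  have hmem : ∀ m : ℕ,
      (fun i => x ((τ ^ m) i)) ∈ LinearMap.ker Φ ⊔ Submodule.span ℝ {x} := by
    intro m
    have hkerm : (fun i => x ((τ ^ m) i)) - x ∈ LinearMap.ker Φ := by
      rw [LinearMap.mem_ker, map_sub, sub_eq_zero]
      funext q
      rw [hΦ, hΦ]
      refine Finset.sum_nbij' (fun i => (τ ^ m) i) (fun i => (τ ^ m)⁻¹ i) ?_ ?_ ?_ ?_ ?_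
      · intro i hi
        have hiq : π i = q := (Finset.mem_filter.mp hi).2
        have : π ((τ ^ m) i) = π i :=
          (hπ i ((τ ^ m) i) ⟨(m : ℤ), by rw [zpow_natCast]⟩).symm
        simp only [Finset.mem_filter, Finset.mem_univ, true_and]
        rw [this, hiq]
      · intro i hi
        have hiq : π i = q := (Finset.mem_filter.mp hi).2
        have : π ((τ ^ m)⁻¹ i) = π i := by
          apply hπ
          exact ⟨(m : ℤ), by rw [zpow_natCast]; simp⟩
        simp only [Finset.mem_filter, Finset.mem_univ, true_and]
        rw [this, hiq]
      · intro i _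
        simp
      · intro i _
        simp
      · intro i _
        rfl
    have hxmem : x ∈ Submodule.span ℝ ({x} : Set (Fin n → ℝ)) :=
      Submodule.mem_span_singleton_self x
    have hrw : (fun i => x ((τ ^ m) i)) = ((fun i => x ((τ ^ m) i)) - x) + x := by
      rw [sub_add_cancel]
    rw [hrw]
    exact Submodule.add_mem_sup hkerm hxmem
  have hspan : Submodule.span ℝ
      (Set.range fun m : Fin (orderOf τ) => (fun i => x ((τ ^ (m : ℕ)) i) : Fin n → ℝ))
      ≤ LinearMap.ker Φ ⊔ Submodule.span ℝ {x} := by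
    rw [Submodule.span_le]
    rintro _ ⟨m, rfl⟩
    exact hmem (m : ℕ)
  have hx1 : Module.finrank ℝ (Submodule.span ℝ ({x} : Set (Fin n → ℝ))) ≤ 1 := by
    by_cases hx : x = 0
    · rw [hx, Submodule.span_zero_singleton]
      simp
    · rw [finrank_span_singleton hx]
  calc Module.finrank ℝ (Submodule.span ℝ
        (Set.range fun m : Fin (orderOf τ) => (fun i => x ((τ ^ (m : ℕ)) i) : Fin n → ℝ)))
      ≤ Module.finrank ℝ (LinearMap.ker Φ ⊔ Submodule.span ℝ {x} :
          Submodule ℝ (Fin n → ℝ)) := Submodule.finrank_mono hspan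
    _ ≤ Module.finrank ℝ (LinearMap.ker Φ)
        + Module.finrank ℝ (Submodule.span ℝ ({x} : Set (Fin n → ℝ))) :=
        Submodule.finrank_add_le_finrank_add_finrank _ _
    _ ≤ (n - ℓ) + 1 := by rw [hkerdim]; omega
    _ ≤ n - (ℓ - 1) := by omega
end

section
/- Let τ ∈ S_n be a product of disjoint cycles c_1, ..., c_ℓ with c_i a cycle on a set of k_i indices. Write x ∈ ℝ^n as x = (x_1, ..., x_ℓ) according to the supports of the cycles. If for each i the vectors x_i, c_i(x_i), ..., c_i^{k_i - 1}(x_i) are linearly independent in ℝ^{k_i}, then dim span_ℝ{x, τ(x), ..., τ^{ν-1}(x)} = deg of the minimal polynomial of the permutation matrix of τ, which equals deg lcm(t^{k_1}−1, ..., t^{k_ℓ}−1). -/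
open Polynomial

/-- Let τ ∈ Sₙ be a product of disjoint cycles with blocks given by b : Fin n → Fin ℓ
(τ preserves each block and acts transitively on it; block i has kᵢ indices). If x ∈ ℝⁿ is
generic, i.e. for each block i the restrictions of x, τ(x), …, τ^{kᵢ-1}(x) to the block are
linearly independent, then dim span{x, τ(x), …, τ^{ν-1}(x)} equals the degree of the minimal
polynomial of the permutation matrix of τ, which equals deg lcm(tᵏ¹ − 1, …, tᵏˡ − 1). -/
theorem stmt17 (n ℓ : ℕ) (τ : Equiv.Perm (Fin n)) (b : Fin n → Fin ℓ) (k : Fin ℓ → ℕ)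
    (hk1 : ∀ i, 1 ≤ k i)
    (hb : ∀ j, b (τ j) = b j)
    (htrans : ∀ (i : Fin ℓ) (p q : Fin n), b p = i → b q = i → ∃ m : ℕ, (τ ^ m) p = q)
    (hcard : ∀ i, (Finset.univ.filter fun j => b j = i).card = k i)
    (x : Fin n → ℝ)
    (hgen : ∀ i : Fin ℓ, LinearIndependent ℝ
      (fun m : Fin (k i) => (fun j : {j : Fin n // b j = i} => x ((τ ^ (m : ℕ)) j.1)))) :
    Module.finrank ℝ (Submodule.span ℝ (Set.range fun m : Fin (orderOf τ) =>
        (fun i => x ((τ ^ (m : ℕ)) i) : Fin n → ℝ)))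
      = (minpoly ℝ (Equiv.Perm.permMatrix ℝ τ)).natDegree
    ∧ (minpoly ℝ (Equiv.Perm.permMatrix ℝ τ)).natDegree
      = (Finset.univ.lcm fun i => (Polynomial.X ^ (k i) - 1 : Polynomial ℝ)).natDegree := by
  classical
  set ν := orderOf τ with hν
  set P := Equiv.Perm.permMatrix ℝ τ with hP
  set L : Polynomial ℝ := Finset.univ.lcm fun i => (X ^ (k i) - 1 : Polynomial ℝ) with hLdef
  set T : Module.End ℝ (Fin n → ℝ) := Matrix.toLinAlgEquiv' P with hTdef
  have hT : ∀ y : Fin n → ℝ, T y = fun j => y (τ j) := by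
    intro y; funext j
    rw [hTdef, Matrix.toLinAlgEquiv'_apply]
    simp [hP, Matrix.mulVec, dotProduct, PEquiv.toMatrix_apply, Equiv.toPEquiv_apply]
  have hTpow : ∀ (m : ℕ) (y : Fin n → ℝ), (T ^ m) y = fun j => y ((τ ^ m) j) := by
    intro m
    induction m with
    | zero => intro y; simp
    | succ m ih =>
      intro y
      funext j
      have h1 : (T ^ (m + 1)) y = T ((T ^ m) y) := by rw [pow_succ']; rfl
      rw [h1, hT]
      show ((T ^ m) y) (τ j) = y ((τ ^ (m + 1)) j)
      rw [ih y]
      show y ((τ ^ m) (τ j)) = y ((τ ^ (m + 1)) j)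
      rw [pow_succ]
      rfl
  -- blocks are preserved by powers
  have hbpow : ∀ (m : ℕ) (j : Fin n), b ((τ ^ m) j) = b j := by
    intro m
    induction m with
    | zero => intro j; rfl
    | succ m ih =>
      intro j
      rw [pow_succ]
      have : (τ ^ m * τ) j = (τ ^ m) (τ j) := rfl
      rw [this, ih, hb]
  have hνpos : 0 < ν := orderOf_pos τ
  have hper : ∀ j : Fin n, Function.IsPeriodicPt τ ν j := by
    intro j
    have h1 : τ ^ ν = 1 := pow_orderOf_eq_one τ
    show τ^[ν] j = j
    rw [Equiv.Perm.iterate_eq_pow, h1]; rfl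
  -- minimal period equals block size
  have hmp : ∀ j : Fin n, Function.minimalPeriod (⇑τ) j = k (b j) := by
    intro j
    set d := Function.minimalPeriod (⇑τ) j with hd
    have hdpos : 0 < d := Function.IsPeriodicPt.minimalPeriod_pos hνpos (hper j)
    have hset : (Finset.univ.filter fun q => b q = b j)
        = (Finset.range d).image fun m => (τ ^ m) j := by
      apply Finset.ext
      intro q
      simp only [Finset.mem_filter, Finset.mem_univ, true_and, Finset.mem_image,
        Finset.mem_range]
      constructor
      · intro hq
        obtain ⟨m, hm⟩ := htrans (b j) j q rfl hq
        refine ⟨m % d, Nat.mod_lt _ hdpos, ?_⟩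
        rw [← hm, ← Equiv.Perm.iterate_eq_pow, ← Equiv.Perm.iterate_eq_pow]
        exact Function.iterate_mod_minimalPeriod_eq
      · rintro ⟨m, _, rfl⟩
        exact hbpow m j
    have hinj : Set.InjOn (fun m => (τ ^ m) j) (Finset.range d) := by
      intro a ha c hc hac
      have := Function.iterate_injOn_Iio_minimalPeriod (f := ⇑τ) (x := j)
      simp only [Finset.coe_range] at ha hc
      apply this ha hc
      simpa [Equiv.Perm.iterate_eq_pow] using hac
    have := hcard (b j)
    rw [hset, Finset.card_image_of_injOn hinj, Finset.card_range] at this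
    exact this
  have hfix : ∀ j : Fin n, (τ ^ (k (b j))) j = j := by
    intro j
    have := Function.isPeriodicPt_minimalPeriod (⇑τ) j
    rw [hmp j] at this
    have h2 : τ^[k (b j)] j = j := this
    rwa [Equiv.Perm.iterate_eq_pow] at h2
  have hdvdν : ∀ i : Fin ℓ, k i ∣ ν := by
    intro i
    have hne : (Finset.univ.filter fun q => b q = i).Nonempty := by
      rw [← Finset.card_pos, hcard i]; exact hk1 i
    obtain ⟨j, hj⟩ := hne
    simp only [Finset.mem_filter, Finset.mem_univ, true_and] at hj
    have := Function.IsPeriodicPt.minimalPeriod_dvd (hper j)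
    rwa [hmp j, hj] at this
  -- evaluation formula
  have hevalform : ∀ (p : Polynomial ℝ) (y : Fin n → ℝ) (N : ℕ), p.natDegree < N →
      (aeval T p) y = ∑ m ∈ Finset.range N, p.coeff m • ((T ^ m) y) := by
    intro p y N hN
    rw [aeval_eq_sum_range' hN]
    simp [LinearMap.sum_apply, LinearMap.smul_apply]
  have hmonic : ∀ i : Fin ℓ, (X ^ (k i) - 1 : Polynomial ℝ).Monic := by
    intro i
    have := monic_X_pow_sub_C (1 : ℝ) (Nat.one_le_iff_ne_zero.mp (hk1 i))
    simpa using this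
  -- reduction mod X^k - 1 on a block
  have hmod : ∀ (p : Polynomial ℝ) (y : Fin n → ℝ) (j : Fin n),
      ((aeval T p) y) j = ((aeval T (p %ₘ (X ^ (k (b j)) - 1))) y) j := by
    intro p y j
    conv_lhs => rw [← modByMonic_add_div p (X ^ (k (b j)) - 1)]
    rw [map_add, map_mul, LinearMap.add_apply]
    have hgen0 : ∀ z : Fin n → ℝ, ((aeval T (X ^ (k (b j)) - 1 : Polynomial ℝ)) z) j = 0 := by
      intro z
      rw [map_sub, map_one, aeval_X_pow, LinearMap.sub_apply, Module.End.one_apply]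
      have hz : ((T ^ (k (b j))) z) j = z j := by
        rw [hTpow]
        simp [hfix j]
      simp [Pi.sub_apply, hz]
    have h0 : ((aeval T (X ^ (k (b j)) - 1 : Polynomial ℝ) * aeval T (p /ₘ (X ^ (k (b j)) - 1))) y) j = 0 := by
      rw [Module.End.mul_apply]
      exact hgen0 _
    rw [Pi.add_apply, h0, add_zero]
  -- key divisibility lemma
  have hkey : ∀ p : Polynomial ℝ, (aeval T p) x = 0 → L ∣ p := by
    intro p hp
    apply Finset.lcm_dvd
    intro i _
    rw [← modByMonic_eq_zero_iff_dvd (hmonic i)]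
    set r := p %ₘ (X ^ (k i) - 1) with hr
    have hrdeg : r.natDegree < k i := by
      rcases eq_or_ne r 0 with h0 | h0
      · rw [h0, natDegree_zero]; exact hk1 i
      · have h1 := degree_modByMonic_lt p (hmonic i)
        rw [← hr] at h1
        have h2 : (X ^ (k i) - 1 : Polynomial ℝ).natDegree = k i := by
          simpa using natDegree_X_pow_sub_C (n := k i) (r := (1:ℝ))
        rw [degree_eq_natDegree h0, degree_eq_natDegree (hmonic i).ne_zero, Nat.cast_lt, h2] at h1
        exact h1
    have hr0 : ∀ j : Fin n, b j = i → ((aeval T r) x) j = 0 := by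
      intro j hj
      have := hmod p x j
      rw [hj] at this
      rw [← this, hp]; rfl
    have hsum : ∑ m : Fin (k i), r.coeff m •
        (fun j : {j : Fin n // b j = i} => x ((τ ^ (m : ℕ)) j.1)) = 0 := by
      funext j
      rw [Finset.sum_apply]
      simp only [Pi.smul_apply, smul_eq_mul, Pi.zero_apply]
      have e1 : ∑ m : Fin (k i), r.coeff m * x ((τ ^ (m : ℕ)) j.1)
          = ∑ m ∈ Finset.range (k i), r.coeff m * x ((τ ^ m) j.1) :=
        Fin.sum_univ_eq_sum_range (fun m => r.coeff m * x ((τ ^ m) j.1)) (k i)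
      rw [e1]
      have e2 : ((aeval T r) x) j.1 = ∑ m ∈ Finset.range (k i), r.coeff m * x ((τ ^ m) j.1) := by
        rw [hevalform r x (k i) hrdeg]
        rw [Finset.sum_apply]
        congr 1
        funext m
        rw [Pi.smul_apply, hTpow, smul_eq_mul]
      rw [← e2, hr0 j.1 j.2]
    have hco := Fintype.linearIndependent_iff.mp (hgen i) (fun m => r.coeff m) hsum
    ext m
    rcases lt_or_ge m (k i) with hm | hm
    · exact hco ⟨m, hm⟩
    · rw [coeff_zero]
      exact coeff_eq_zero_of_natDegree_lt (lt_of_lt_of_le hrdeg hm)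
  have hL0 : L ≠ 0 := by
    intro h
    rw [hLdef, Finset.lcm_eq_zero_iff] at h
    obtain ⟨i, _, hi⟩ := h
    exact (hmonic i).ne_zero (by simpa using hi)
  have hLmonic : L.Monic := by
    have := monic_normalize (R := ℝ) hL0
    rwa [hLdef, Finset.normalize_lcm] at this
  -- L annihilates T
  have hannL : aeval T L = 0 := by
    apply LinearMap.ext
    intro y
    funext j
    rw [hmod L y j]
    have : L %ₘ (X ^ (k (b j)) - 1) = 0 := by
      rw [modByMonic_eq_zero_iff_dvd (hmonic (b j))]
      exact Finset.dvd_lcm (Finset.mem_univ (b j))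
    rw [this]
    simp
  -- minpoly identification
  have hPT : minpoly ℝ T = minpoly ℝ P := minpoly.algEquiv_eq Matrix.toLinAlgEquiv' P
  have hμdvd : minpoly ℝ T ∣ L := minpoly.dvd ℝ T hannL
  have hLdvdμ : L ∣ minpoly ℝ T := by
    apply hkey
    rw [minpoly.aeval]
    rfl
  have hμ0 : minpoly ℝ T ≠ 0 := ne_zero_of_dvd_ne_zero hL0 hμdvd
  have hdegμ : (minpoly ℝ T).natDegree = L.natDegree :=
    le_antisymm (natDegree_le_of_dvd hμdvd hL0) (natDegree_le_of_dvd hLdvdμ hμ0)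
  -- degree of L is at most ν
  have hDν : L.natDegree ≤ ν := by
    have hdvd : L ∣ (X ^ ν - 1 : Polynomial ℝ) := by
      apply Finset.lcm_dvd
      intro i _
      obtain ⟨c, hc⟩ := hdvdν i
      have := sub_dvd_pow_sub_pow (X ^ (k i) : Polynomial ℝ) 1 c
      rw [one_pow, ← pow_mul, ← hc] at this
      exact this
    have hXν : (X ^ ν - 1 : Polynomial ℝ) ≠ 0 := by
      have := monic_X_pow_sub_C (1 : ℝ) (Nat.pos_iff_ne_zero.mp hνpos)
      simpa using this.ne_zero
    have := natDegree_le_of_dvd hdvd hXν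
    rwa [show (X ^ ν - 1 : Polynomial ℝ).natDegree = ν by
      simpa using natDegree_X_pow_sub_C (n := ν) (r := (1:ℝ))] at this
  -- linear independence of T^m x for m < deg L
  have hWli : LinearIndependent ℝ (fun m : Fin L.natDegree => (T ^ (m : ℕ)) x) := by
    rw [Fintype.linearIndependent_iff]
    intro g hg m0
    set p : Polynomial ℝ := ∑ m : Fin L.natDegree, monomial (m : ℕ) (g m) with hpdef
    have hap : (aeval T p) x = 0 := by
      rw [hpdef, map_sum, LinearMap.sum_apply]
      simp only [aeval_monomial, Module.End.mul_apply, Module.algebraMap_end_apply]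
      exact hg
    have hdvd := hkey p hap
    have hD0 : 0 < L.natDegree := lt_of_le_of_lt (Nat.zero_le _) m0.2
    have hp0 : p = 0 := by
      by_contra hp0
      have h1 : p.natDegree ≤ L.natDegree - 1 := by
        apply natDegree_sum_le_of_forall_le
        intro m _
        exact le_trans (natDegree_monomial_le _) (by omega)
      have h2 : p.natDegree < L.natDegree := lt_of_le_of_lt h1 (Nat.sub_lt hD0 one_pos)
      exact absurd (natDegree_le_of_dvd hdvd hp0) (not_le.mpr h2)
    have hco := congrArg (fun q => coeff q (m0 : ℕ)) hp0
    simp only [hpdef, finset_sum_coeff, coeff_monomial, coeff_zero] at hco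
    rw [Finset.sum_eq_single m0 (fun m _ hm => by
        rw [if_neg]
        exact fun h => hm (Fin.ext h))
      (fun hm => absurd (Finset.mem_univ m0) hm)] at hco
    simpa using hco
  -- all powers lie in the span of the first deg L ones
  have hsub : ∀ m : ℕ, (T ^ m) x ∈ Submodule.span ℝ
      (Set.range fun m : Fin L.natDegree => (T ^ (m : ℕ)) x) := by
    intro m
    have hxm : (T ^ m) x = (aeval T ((X : Polynomial ℝ) ^ m %ₘ L)) x := by
      conv_lhs => rw [show (T ^ m) x = (aeval T ((X : Polynomial ℝ) ^ m)) x by rw [aeval_X_pow]]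
      conv_lhs => rw [← modByMonic_add_div ((X : Polynomial ℝ) ^ m) L]
      rw [map_add, map_mul, hannL, zero_mul, add_zero]
    rcases eq_or_ne ((X : Polynomial ℝ) ^ m %ₘ L) 0 with h0 | h0
    · rw [hxm, h0]; simp
    · have hrd : ((X : Polynomial ℝ) ^ m %ₘ L).natDegree < L.natDegree := by
        have h1 := degree_modByMonic_lt ((X : Polynomial ℝ) ^ m) hLmonic
        rwa [degree_eq_natDegree h0, degree_eq_natDegree hL0, Nat.cast_lt] at h1
      rw [hxm, hevalform _ x _ hrd]
      apply Submodule.sum_mem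
      intro c hc
      apply Submodule.smul_mem
      apply Submodule.subset_span
      exact ⟨⟨c, Finset.mem_range.mp hc⟩, rfl⟩
  have hspan : Submodule.span ℝ (Set.range fun m : Fin ν =>
        (fun i => x ((τ ^ (m : ℕ)) i) : Fin n → ℝ))
      = Submodule.span ℝ (Set.range fun m : Fin L.natDegree => (T ^ (m : ℕ)) x) := by
    apply le_antisymm
    · rw [Submodule.span_le]
      rintro _ ⟨m, rfl⟩
      show (fun i => x ((τ ^ (m : ℕ)) i)) ∈ _
      rw [(hTpow (m : ℕ) x).symm]
      exact hsub (m : ℕ)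
    · rw [Submodule.span_le]
      rintro _ ⟨m, rfl⟩
      apply Submodule.subset_span
      show ((T ^ (m : ℕ)) x) ∈ _
      exact ⟨⟨(m : ℕ), lt_of_lt_of_le m.2 hDν⟩, by exact (hTpow (m : ℕ) x).symm⟩
  have hrank : Module.finrank ℝ (Submodule.span ℝ (Set.range fun m : Fin ν =>
        (fun i => x ((τ ^ (m : ℕ)) i) : Fin n → ℝ))) = L.natDegree := by
    rw [hspan, finrank_span_eq_card hWli, Fintype.card_fin]
  rw [← hPT]
  exact ⟨by rw [hrank, hdegμ], by rw [hdegμ]⟩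
end
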